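/- arXiv:1105.5729 — 5 statements merged into one kernel-verified Lean document; each statement's English description precedes it below -/
import Mathlib

section
/- For all parameters a₁ = (b₁, ε₁) and a₂ = (b₂, ε₂) in 𝔹 = 𝔻 × 𝕋, and all z ∈ ℂ such that all denominators involved are nonzero (in particular b̄₂z ≠ 1 and b̄z ≠ 1), the composition of Blaschke functions satisfies B_{a₁}(B_{a₂}(z)) = B_{(b,ε)}(z), where b = (b₁ε̄₂ + b₂)/(1 + b₁ b̄₂ ε̄₂) and ε = ε₁(ε₂ + b₁b̄₂)/(1 + ε₂ b̄₁ b₂). -/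
open Complex ComplexConjugate

/-- The Blaschke function `B_{(b,ε)}(z) = ε (z - b) / (1 - conj b · z)`. -/
noncomputable def blaschke (b ε z : ℂ) : ℂ := ε * (z - b) / (1 - conj b * z)

set_option maxHeartbeats 2000000 in
/-- Composition of Blaschke functions: `B_{a₁} ∘ B_{a₂} = B_{a₁ ∘ a₂}` where the
parameter of the composition is given by the Blaschke group operation (1.3). -/
theorem blaschke_comp (b₁ ε₁ b₂ ε₂ z : ℂ)
    (hb₁ : ‖b₁‖ < 1) (hb₂ : ‖b₂‖ < 1)
    (hε₁ : ‖ε₁‖ = 1) (hε₂ : ‖ε₂‖ = 1)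
    (hden₂ : 1 - conj b₂ * z ≠ 0)
    (hden₁ : 1 - conj b₁ * blaschke b₂ ε₂ z ≠ 0)
    (hdenb : 1 + b₁ * conj b₂ * conj ε₂ ≠ 0)
    (hdenε : 1 + ε₂ * conj b₁ * b₂ ≠ 0)
    (hden : 1 - conj ((b₁ * conj ε₂ + b₂) / (1 + b₁ * conj b₂ * conj ε₂)) * z ≠ 0) :
    blaschke b₁ ε₁ (blaschke b₂ ε₂ z) =
      blaschke ((b₁ * conj ε₂ + b₂) / (1 + b₁ * conj b₂ * conj ε₂))
        (ε₁ * (ε₂ + b₁ * conj b₂) / (1 + ε₂ * conj b₁ * b₂)) z := by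
  have hε₂0 : ε₂ ≠ 0 := by
    intro h; rw [h] at hε₂; simp at hε₂
  have hε₂' : ε₂ * conj ε₂ = 1 := by
    rw [Complex.mul_conj']
    norm_cast
    simp [Complex.sq_norm, Complex.normSq_eq_norm_sq, hε₂]
  have hc : conj ε₂ = ε₂⁻¹ := by
    rw [inv_eq_one_div, eq_div_iff hε₂0, mul_comm]; exact hε₂'
  have hconjden : conj (1 + b₁ * conj b₂ * conj ε₂) = 1 + ε₂ * conj b₁ * b₂ := by
    simp [map_add, map_mul]; ring
  rw [map_div₀, hconjden] at hden
  simp only [blaschke, map_div₀, hconjden] at hden₁ ⊢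
  simp only [map_add, map_mul, map_inv₀, hc, inv_inv, Complex.conj_conj] at hden hdenb hdenε ⊢
  have h1 : ε₂ + b₁ * conj b₂ ≠ 0 := by
    intro h
    apply hdenb
    field_simp
    linear_combination h
  rw [div_eq_div_iff hden₁ hden]
  have hA : 1 - z * conj b₂ ≠ 0 := by rw [mul_comm]; exact hden₂
  have hB : 1 + ε₂ * b₂ * conj b₁ ≠ 0 := by rw [mul_right_comm]; exact hdenε
  have hC : ε₂ + conj b₂ * b₁ ≠ 0 := by rw [mul_comm]; exact h1
  field_simp
  ring
end

section
/- (Theorem 2.1, part 1) Let a > 1, let (N(k))_{k≥1} be an increasing sequence of natural numbers with N(0) = 1, and suppose the sequence (N(k)a^{−2k})_{k≥1} is increasing with finite limit α = lim_{k→∞} N(k)a^{−2k} < ∞. Then the set 𝒜 = {z_{kℓ} = r_k e^{2πiℓ/N(k)} : k ∈ ℕ, 0 ≤ ℓ ≤ N(k)−1} is uniformly discrete: there exists δ > 0 such that ρ(z, w) ≥ δ for all distinct points z, w ∈ 𝒜. -/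
open Complex ComplexConjugate Filter

/-- `r_k = (aᵏ - a⁻ᵏ)/(aᵏ + a⁻ᵏ)`, `k ∈ ℕ`. -/
noncomputable def rPt (a : ℝ) (k : ℕ) : ℝ := (a ^ k - (a ^ k)⁻¹) / (a ^ k + (a ^ k)⁻¹)

/-- The sampling nodes `z_{kℓ} = r_k · exp(2πiℓ/N(k))`. -/
noncomputable def zPt (a : ℝ) (N : ℕ → ℕ) (k ℓ : ℕ) : ℂ :=
  (rPt a k : ℂ) * Complex.exp (2 * Real.pi * Complex.I * ℓ / N k)

/- ## Auxiliary lemmas -/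

lemma absSq_one_sub (z w : ℂ) :
    ‖1 - conj w * z‖ ^ 2
      = ‖z - w‖ ^ 2 + (1 - ‖z‖ ^ 2) * (1 - ‖w‖ ^ 2) := by
  rw [Complex.sq_norm, Complex.sq_norm, Complex.sq_norm, Complex.sq_norm]
  simp only [Complex.normSq_apply, Complex.sub_re, Complex.sub_im, Complex.mul_re,
    Complex.mul_im, Complex.one_re, Complex.one_im, Complex.conj_re, Complex.conj_im]
  ring

lemma abs_exp_sub_one_sq (θ : ℝ) :
    ‖Complex.exp ((θ : ℂ) * Complex.I) - 1‖ ^ 2 = 2 - 2 * Real.cos θ := by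
  rw [Complex.sq_norm]
  simp only [Complex.normSq_apply, Complex.sub_re, Complex.sub_im,
    Complex.exp_ofReal_mul_I_re, Complex.exp_ofReal_mul_I_im, Complex.one_re, Complex.one_im]
  nlinarith [Real.sin_sq_add_cos_sq θ]

lemma sin_ge (N d : ℕ) (h1 : 1 ≤ d) (h2 : d < N) :
    2 / (N : ℝ) ≤ Real.sin (Real.pi * d / N) := by
  have hNn : 0 < N := by omega
  have hN : (0 : ℝ) < N := by exact_mod_cast hNn
  rcases le_or_gt (2 * d) N with hc | hc
  · have hd1 : (1 : ℝ) ≤ (d : ℝ) := by exact_mod_cast h1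
    have hx0 : (0 : ℝ) ≤ Real.pi * d / N := by positivity
    have hx1 : Real.pi * d / N ≤ Real.pi / 2 := by
      rw [div_le_div_iff₀ hN two_pos]
      have : (2 * d : ℝ) ≤ N := by exact_mod_cast hc
      nlinarith [Real.pi_pos]
    have hs := Real.mul_le_sin hx0 hx1
    have heq : 2 / Real.pi * (Real.pi * d / N) = 2 * d / N := by
      field_simp [Real.pi_ne_zero]
    rw [heq] at hs
    refine le_trans ?_ hs
    rw [div_le_div_iff₀ hN hN]; nlinarith
  · have hd' : d ≤ N := h2.le
    have key : Real.pi * d / N = Real.pi - Real.pi * (N - d : ℕ) / N := by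
      have h1 : ((N - d : ℕ) : ℝ) = (N : ℝ) - d := by
        push_cast [Nat.cast_sub hd']; ring
      rw [h1]; field_simp; ring
    have h1' : 1 ≤ N - d := by omega
    have h2' : 2 * (N - d) ≤ N := by omega
    have hd1 : (1 : ℝ) ≤ ((N - d : ℕ) : ℝ) := by exact_mod_cast h1'
    have hx0 : (0 : ℝ) ≤ Real.pi * (N - d : ℕ) / N := by positivity
    have hx1 : Real.pi * (N - d : ℕ) / N ≤ Real.pi / 2 := by
      rw [div_le_div_iff₀ hN two_pos]
      have : (2 * (N - d : ℕ) : ℝ) ≤ N := by exact_mod_cast h2'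
      nlinarith [Real.pi_pos]
    have hs := Real.mul_le_sin hx0 hx1
    have heq : 2 / Real.pi * (Real.pi * (N - d : ℕ) / N) = 2 * (N - d : ℕ) / N := by
      field_simp [Real.pi_ne_zero]
    rw [heq] at hs
    rw [key, Real.sin_pi_sub]
    refine le_trans ?_ hs
    rw [div_le_div_iff₀ hN hN]; nlinarith

lemma chord_ge (N d : ℕ) (h1 : 1 ≤ d) (h2 : d < N) :
    4 / (N : ℝ) ≤ ‖Complex.exp (((2 * Real.pi * d / N : ℝ) : ℂ) * Complex.I) - 1‖ := by
  have hNn : 0 < N := by omega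
  have hN : (0 : ℝ) < N := by exact_mod_cast hNn
  have hsq := abs_exp_sub_one_sq (2 * Real.pi * d / N)
  have hco : Real.cos (2 * Real.pi * d / N) = 2 * Real.cos (Real.pi * d / N) ^ 2 - 1 := by
    rw [show 2 * Real.pi * (d : ℝ) / N = 2 * (Real.pi * d / N) by ring, Real.cos_two_mul]
  have hsin := sin_ge N d h1 h2
  have hpyth := Real.sin_sq_add_cos_sq (Real.pi * d / N)
  have habs : 0 ≤ ‖Complex.exp (((2 * Real.pi * d / N : ℝ) : ℂ) * Complex.I) - 1‖ :=
    norm_nonneg _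
  have h2N : (0:ℝ) < 2 / N := by positivity
  have hsin2 : (2 / (N:ℝ)) ^ 2 ≤ Real.sin (Real.pi * d / N) ^ 2 :=
    pow_le_pow_left₀ h2N.le hsin 2
  have hA2 : (4 / (N:ℝ)) ^ 2
      ≤ ‖Complex.exp (((2 * Real.pi * d / N : ℝ) : ℂ) * Complex.I) - 1‖ ^ 2 := by
    rw [hsq]
    have he : (4/(N:ℝ))^2 = 4 * (2/(N:ℝ))^2 := by ring
    rw [he]; nlinarith [hsin2, hpyth, hco]
  nlinarith [hA2, habs, h2N]

lemma rPt_eq (a : ℝ) (ha : 0 < a) (k : ℕ) :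
    rPt a k = ((a ^ k) ^ 2 - 1) / ((a ^ k) ^ 2 + 1) := by
  have hb : (0:ℝ) < a ^ k := pow_pos ha k
  unfold rPt
  rw [div_eq_div_iff (by positivity) (by positivity)]
  field_simp

lemma rPt_nonneg (a : ℝ) (ha : 1 ≤ a) (k : ℕ) : 0 ≤ rPt a k := by
  have hb : (1:ℝ) ≤ a ^ k := one_le_pow₀ ha
  rw [rPt_eq a (by linarith) k]
  apply div_nonneg (by nlinarith) (by positivity)

lemma zPt_eq' (a : ℝ) (N : ℕ → ℕ) (k ℓ : ℕ) :
    zPt a N k ℓ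
      = (rPt a k : ℂ) * Complex.exp (((2 * Real.pi * ℓ / (N k) : ℝ) : ℂ) * Complex.I) := by
  unfold zPt
  congr 2
  push_cast
  ring

lemma abs_zPt (a : ℝ) (ha : 1 ≤ a) (N : ℕ → ℕ) (k ℓ : ℕ) :
    ‖zPt a N k ℓ‖ = rPt a k := by
  rw [zPt_eq', norm_mul, Complex.norm_exp_ofReal_mul_I, mul_one, Complex.norm_real, Real.norm_eq_abs,
    _root_.abs_of_nonneg (rPt_nonneg a ha k)]

lemma ratio_lower (m1 d c D : ℝ) (hm1 : 0 < m1) (hd : 0 < d) (hD : 0 < D)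
    (hDle : D ≤ d + c) (hcd : m1 * c ≤ d) : m1 / (m1 + 1) ≤ d / D := by
  rw [div_le_div_iff₀ (by linarith) hD]
  nlinarith

set_option maxHeartbeats 1000000 in
lemma cross_bound (a p q d D : ℝ) (ha : 1 < a) (hp : 1 ≤ p) (hq : a * p ≤ q)
    (hd : (q^2-1)/(q^2+1) - (p^2-1)/(p^2+1) ≤ d)
    (hD : 0 < D)
    (hD2 : D^2 = d^2 + (1 - ((q^2-1)/(q^2+1))^2) * (1 - ((p^2-1)/(p^2+1))^2)) :
    (a^2-1)/(a^2-1+2*a) ≤ d / D := by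
  have hp0 : (0:ℝ) < p := by linarith
  have hq1 : 1 < q := by nlinarith
  have hP : (0:ℝ) < p^2+1 := by positivity
  have hQ : (0:ℝ) < q^2+1 := by positivity
  have hK : (0:ℝ) < (p^2+1)*(q^2+1) := by positivity
  set R := (q^2-1)/(q^2+1) with hRdef
  set r := (p^2-1)/(p^2+1) with hrdef
  set c := 4*p*q/((p^2+1)*(q^2+1)) with hcdef
  have hc : 0 < c := by rw [hcdef]; positivity
  have hqp : p < q := by nlinarith
  have hpq2 : p^2 < q^2 := by nlinarith [mul_pos (show (0:ℝ) < q - p by linarith) (show (0:ℝ) < q + p by linarith)]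
  have hRr : R - r = 2*(q^2-p^2)/((p^2+1)*(q^2+1)) := by
    rw [hRdef, hrdef]; field_simp; ring
  have hRrpos : 0 < R - r := by
    rw [hRr]; apply div_pos (by nlinarith) hK
  have hcc : (1 - R^2)*(1 - r^2) = c^2 := by
    rw [hRdef, hrdef, hcdef]; field_simp; ring
  have hd0 : 0 < d := lt_of_lt_of_le hRrpos hd
  have hDle : D ≤ d + c := by nlinarith [hD2, hcc, mul_pos hd0 hc]
  have step1 : (R - r)/(R - r + c) ≤ d / D := by
    rw [div_le_div_iff₀ (by linarith) hD]
    nlinarith [mul_pos hRrpos hc, mul_le_mul_of_nonneg_left hDle hRrpos.le,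
      mul_le_mul_of_nonneg_right hd hc.le]
  refine le_trans ?_ step1
  have key : (a^2-1)*c ≤ 2*a*(R-r) := by
    rw [hRr, hcdef,
      show (a^2-1)*(4*p*q/((p^2+1)*(q^2+1))) = ((a^2-1)*(4*p*q))/((p^2+1)*(q^2+1)) from by ring,
      show 2*a*(2*(q^2-p^2)/((p^2+1)*(q^2+1))) = (2*a*(2*(q^2-p^2)))/((p^2+1)*(q^2+1)) from by ring,
      ]
    refine (div_le_div_iff_of_pos_right hK).mpr ?_
    nlinarith [mul_nonneg (sub_nonneg.2 hq) (show (0:ℝ) ≤ a*q+p by positivity)]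
  rw [div_le_div_iff₀ (by nlinarith) (by linarith)]
  nlinarith [key]

lemma alpha_ge (a : ℝ) (N : ℕ → ℕ)
    (hmono : ∀ k, 1 ≤ k →
      (N k : ℝ) * (a ^ (2 * k))⁻¹ ≤ (N (k + 1) : ℝ) * (a ^ (2 * (k + 1)))⁻¹)
    (α : ℝ) (hα : Tendsto (fun k : ℕ => (N k : ℝ) * (a ^ (2 * k))⁻¹) atTop (nhds α))
    (k : ℕ) (hk : 1 ≤ k) : (N k : ℝ) * (a ^ (2 * k))⁻¹ ≤ α := by
  refine ge_of_tendsto hα ?_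
  filter_upwards [eventually_ge_atTop k] with n hn
  induction n, hn using Nat.le_induction with
  | base => exact le_rfl
  | succ n hn ih => exact ih.trans (hmono n (hk.trans hn))

set_option maxHeartbeats 4000000 in
/-- Theorem 2.1, part 1: if `a > 1`, `(N(k))_{k ≥ 1}` is an increasing sequence of
natural numbers with `N(0) = 1`, and `(N(k) a^{-2k})_{k ≥ 1}` is increasing with
finite limit `α`, then `𝒜 = {z_{kℓ}}` is uniformly discrete: there is `δ > 0`
with `ρ(z, w) ≥ δ` for all distinct `z, w ∈ 𝒜`. -/
theorem nodes_uniformly_discrete (a : ℝ) (ha : 1 < a) (N : ℕ → ℕ) (hN0 : N 0 = 1)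
    (hNmono : ∀ k, 1 ≤ k → N k ≤ N (k + 1))
    (hmono : ∀ k, 1 ≤ k →
      (N k : ℝ) * (a ^ (2 * k))⁻¹ ≤ (N (k + 1) : ℝ) * (a ^ (2 * (k + 1)))⁻¹)
    (α : ℝ)
    (hα : Tendsto (fun k : ℕ => (N k : ℝ) * (a ^ (2 * k))⁻¹) atTop (nhds α)) :
    ∃ δ > 0, ∀ z ∈ {w : ℂ | ∃ k ℓ, ℓ < N k ∧ w = zPt a N k ℓ},
      ∀ w ∈ {w : ℂ | ∃ k ℓ, ℓ < N k ∧ w = zPt a N k ℓ}, z ≠ w →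
        δ ≤ ‖z - w‖ / ‖1 - conj w * z‖ := by
  have ha0 : (0:ℝ) < a := by linarith
  set r1 : ℝ := (a^2-1)/(a^2+1) with hr1def
  set A : ℝ := max α 1 with hAdef
  have hA1 : (1:ℝ) ≤ A := by rw [hAdef]; exact le_max_right _ _
  have hA0 : (0:ℝ) < A := by linarith
  have hαA : α ≤ A := by rw [hAdef]; exact le_max_left _ _
  have hr1pos : 0 < r1 := by
    rw [hr1def]; apply div_pos <;> nlinarith
  set m1 : ℝ := r1 / A with hm1def
  have hm1 : 0 < m1 := by rw [hm1def]; exact div_pos hr1pos hA0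
  set δ : ℝ := min ((a^2-1)/(a^2-1+2*a)) (m1/(m1+1)) with hδdef
  have hδpos : 0 < δ := by
    rw [hδdef]
    apply lt_min
    · apply div_pos <;> nlinarith
    · apply div_pos hm1 (by linarith)
  refine ⟨δ, hδpos, ?_⟩
  have main : ∀ k j ℓ m : ℕ, ℓ < N k → m < N j → (j < k ∨ (j = k ∧ m < ℓ)) →
      δ ≤ ‖zPt a N k ℓ - zPt a N j m‖ /
          ‖1 - conj (zPt a N j m) * zPt a N k ℓ‖ := by
    intro k j ℓ m hℓ hm hord
    set z := zPt a N k ℓ with hzdef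
    set w := zPt a N j m with hwdef
    set d := ‖z - w‖ with hddef
    set D := ‖1 - conj w * z‖ with hDdef
    have hDnn : 0 ≤ D := by rw [hDdef]; exact norm_nonneg _
    rcases hord with hjk | ⟨rfl, hmℓ⟩
    · -- cross-circle case
      set p := a ^ j with hpdef
      set q := a ^ k with hqdef
      have hp1 : (1:ℝ) ≤ p := by rw [hpdef]; exact one_le_pow₀ ha.le
      have hq1 : (1:ℝ) ≤ q := by rw [hqdef]; exact one_le_pow₀ ha.le
      have hpq : a * p ≤ q := by
        rw [hpdef, hqdef, ← pow_succ']
        exact pow_le_pow_right₀ ha.le hjk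
      have hz : ‖z‖ = (q^2-1)/(q^2+1) := by
        rw [hzdef, abs_zPt a ha.le, rPt_eq a ha0, hqdef]
      have hw : ‖w‖ = (p^2-1)/(p^2+1) := by
        rw [hwdef, abs_zPt a ha.le, rPt_eq a ha0, hpdef]
      have hd : (q^2-1)/(q^2+1) - (p^2-1)/(p^2+1) ≤ d := by
        have h := norm_sub_norm_le z w
        rw [hz, hw] at h
        rw [hddef]; exact h
      have hD2' : D^2 = d^2 + (1 - ((q^2-1)/(q^2+1))^2) * (1 - ((p^2-1)/(p^2+1))^2) := by
        rw [hDdef, hddef, absSq_one_sub, hz, hw]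
      have hqp : p < q := by nlinarith
      have hq0 : (0:ℝ) < q := by linarith
      have hp0 : (0:ℝ) < p := by linarith
      have hqqpp : 0 < q^2 - p^2 := by nlinarith
      have hRrpos : 0 < (q^2-1)/(q^2+1) - (p^2-1)/(p^2+1) := by
        rw [div_sub_div _ _ (by positivity) (by positivity)]
        apply div_pos (by nlinarith) (by positivity)
      have hd0 : 0 < d := lt_of_lt_of_le hRrpos hd
      have hR1 : ((q^2-1)/(q^2+1))^2 ≤ 1 := by
        rw [div_pow, div_le_one (by positivity)]; nlinarith
      have hr1' : ((p^2-1)/(p^2+1))^2 ≤ 1 := by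
        rw [div_pow, div_le_one (by positivity)]; nlinarith
      have hDsq : 0 < D^2 := by
        rw [hD2']
        nlinarith [mul_nonneg (sub_nonneg.2 hR1) (sub_nonneg.2 hr1'), mul_pos hd0 hd0]
      have hD : 0 < D := by nlinarith [hDnn, hDsq]
      refine le_trans ?_ (cross_bound a p q d D ha hp1 hpq hd hD hD2')
      rw [hδdef]; exact min_le_left _ _
    · -- same-circle case
      have hℓ1 : 1 ≤ ℓ := by omega
      have hk1 : 1 ≤ j := by
        by_contra h
        push_neg at h
        interval_cases j
        · rw [hN0] at hℓ; omega
      have hNkpos : (0:ℝ) < N j := by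
        have h : 0 < N j := by omega
        exact_mod_cast h
      set p := a ^ j with hpdef
      have hap : a ≤ p := by
        rw [hpdef]
        calc a = a ^ 1 := (pow_one a).symm
        _ ≤ a ^ j := pow_le_pow_right₀ ha.le hk1
      have hp1 : (1:ℝ) ≤ p := by linarith
      have hp0 : (0:ℝ) < p := by linarith
      set r : ℝ := rPt a j with hrdef
      have hr_eq : r = (p^2-1)/(p^2+1) := by rw [hrdef, rPt_eq a ha0, hpdef]
      have hr1r : r1 ≤ r := by
        rw [hr_eq, hr1def, div_le_div_iff₀ (by positivity) (by positivity)]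
        nlinarith [pow_le_pow_left₀ (by linarith : (0:ℝ) ≤ a) hap 2]
      have hrpos : 0 < r := lt_of_lt_of_le hr1pos hr1r
      have hrlt1 : r < 1 := by
        rw [hr_eq, div_lt_one (by positivity)]; linarith
      set c : ℝ := 1 - r^2 with hcdef
      have hc0 : 0 < c := by rw [hcdef]; nlinarith
      have hcle : c ≤ 4/p^2 := by
        rw [hcdef, hr_eq]
        have h4 : 1 - ((p^2-1)/(p^2+1))^2 = 4*p^2/(p^2+1)^2 := by
          field_simp; ring
        rw [h4, div_le_div_iff₀ (by positivity) (by positivity)]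
        nlinarith [sq_nonneg p, sq_nonneg (p^2-1)]
      have hd1 : 1 ≤ ℓ - m := by omega
      have hd2 : ℓ - m < N j := by omega
      have hsplit : (((2 * Real.pi * ℓ / (N j) : ℝ)) : ℂ) * Complex.I
          = (((2 * Real.pi * m / (N j) : ℝ)) : ℂ) * Complex.I
            + (((2 * Real.pi * (ℓ - m : ℕ) / (N j) : ℝ)) : ℂ) * Complex.I := by
        rw [← add_mul, ← Complex.ofReal_add]
        congr 2
        have hcast : ((ℓ - m : ℕ) : ℝ) = (ℓ : ℝ) - m := by
          push_cast [Nat.cast_sub hmℓ.le]; ring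
        rw [hcast]; ring
      have hzw : z - w
          = (r : ℂ) * Complex.exp (((2 * Real.pi * m / (N j) : ℝ) : ℂ) * Complex.I) *
            (Complex.exp (((2 * Real.pi * (ℓ - m : ℕ) / (N j) : ℝ) : ℂ) * Complex.I) - 1) := by
        rw [hzdef, hwdef, zPt_eq', zPt_eq', hsplit, Complex.exp_add, hrdef]
        ring
      have habs_d : d = r * ‖
          (Complex.exp (((2 * Real.pi * (ℓ - m : ℕ) / (N j) : ℝ) : ℂ) * Complex.I) - 1)‖ := by
        rw [hddef, hzw, norm_mul, norm_mul, Complex.norm_real, Real.norm_eq_abs,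
          Complex.norm_exp_ofReal_mul_I, mul_one, _root_.abs_of_nonneg hrpos.le]
      have hd_lb : r * (4 / (N j : ℝ)) ≤ d := by
        rw [habs_d]
        exact mul_le_mul_of_nonneg_left (chord_ge (N j) (ℓ - m) hd1 hd2) hrpos.le
      have hd0 : 0 < d :=
        lt_of_lt_of_le (mul_pos hrpos (div_pos (by norm_num) hNkpos)) hd_lb
      have hNA : (N j : ℝ) ≤ A * p^2 := by
        have h1 := alpha_ge a N hmono α hα j hk1
        have h2 : a ^ (2 * j) = p^2 := by rw [hpdef, mul_comm, pow_mul]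
        rw [h2] at h1
        have h3 : (N j : ℝ) * (p^2)⁻¹ ≤ A := le_trans h1 hαA
        have h4 : (N j : ℝ) = (N j : ℝ) * (p^2)⁻¹ * p^2 := by
          field_simp
        rw [h4]
        nlinarith [sq_nonneg p, mul_le_mul_of_nonneg_right h3 (sq_nonneg p)]
      have hAp2 : (0:ℝ) < A * p^2 := mul_pos hA0 (by positivity)
      have hcd : m1 * c ≤ d := by
        have e1 : m1 * c ≤ m1 * (4/p^2) := mul_le_mul_of_nonneg_left hcle hm1.le
        have e2 : m1 * (4/p^2) = 4 * r1 / (A * p^2) := by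
          rw [hm1def]; field_simp
        have e3 : 4 * r1 / (A * p^2) ≤ 4 * r1 / (N j : ℝ) := by
          rw [div_le_div_iff₀ hAp2 hNkpos]
          nlinarith [mul_le_mul_of_nonneg_left hNA (by linarith : (0:ℝ) ≤ 4*r1)]
        have e4 : 4 * r1 / (N j : ℝ) ≤ r * (4 / (N j : ℝ)) := by
          rw [show r * (4 / (N j : ℝ)) = 4 * r / (N j : ℝ) by ring,
            div_le_div_iff₀ hNkpos hNkpos]
          nlinarith [hr1r, hNkpos]
        calc m1 * c ≤ m1 * (4/p^2) := e1
          _ = 4 * r1 / (A * p^2) := e2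
          _ ≤ 4 * r1 / (N j : ℝ) := e3
          _ ≤ r * (4 / (N j : ℝ)) := e4
          _ ≤ d := hd_lb
      have hzabs : ‖z‖ = r := by rw [hzdef, abs_zPt a ha.le, hrdef]
      have hwabs : ‖w‖ = r := by rw [hwdef, abs_zPt a ha.le, hrdef]
      have hD2' : D^2 = d^2 + c^2 := by
        rw [hDdef, hddef, absSq_one_sub, hzabs, hwabs, hcdef]; ring
      have hDsq : 0 < D^2 := by
        rw [hD2']; nlinarith [mul_pos hd0 hd0, sq_nonneg c]
      have hD : 0 < D := by nlinarith [hDnn, hDsq]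
      refine le_trans ?_ (ratio_lower m1 d c D hm1 hd0 hD (by nlinarith [hD2', mul_pos hd0 hc0]) hcd)
      rw [hδdef]; exact min_le_right _ _
  rintro z ⟨k, ℓ, hℓ, rfl⟩ w ⟨j, m, hm, rfl⟩ hne
  have hsymm : ∀ u v : ℂ, ‖u - v‖ / ‖1 - conj v * u‖
      = ‖v - u‖ / ‖1 - conj u * v‖ := by
    intro u v
    rw [norm_sub_rev]
    congr 1
    rw [show (1 : ℂ) - conj u * v = conj (1 - conj v * u) by
      rw [map_sub, map_mul, Complex.conj_conj, map_one]; ring]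
    exact (Complex.norm_conj _).symm
  rcases Nat.lt_trichotomy j k with h | h | h
  · exact main k j ℓ m hℓ hm (Or.inl h)
  · subst h
    rcases Nat.lt_trichotomy m ℓ with h' | h' | h'
    · exact main j j ℓ m hℓ hm (Or.inr ⟨rfl, h'⟩)
    · subst h'; exact absurd rfl hne
    · rw [hsymm]; exact main j j m ℓ hm hℓ (Or.inr ⟨rfl, h'⟩)
  · rw [hsymm]; exact main j k m ℓ hm hℓ (Or.inl h)
end

section
/- (Theorem 2.1, part 2) Let a > 1, let (N(k))_{k≥1} be natural numbers with N(0) = 1, and suppose the sequence (N(k)a^{−2k})_{k≥1} is decreasing with limit α ∈ (0, ∞). Set K = 1 + (a − a⁻¹)²/4 + π²a²/(4α²) and ε₀ = √(1 − 1/K). Then ε₀ ∈ (0,1) and for every z ∈ 𝔻 there exists a point w ∈ 𝒜 with ρ(z, w) ≤ ε₀; in particular 𝒜 is an ε-net for every ε ∈ (ε₀, 1). -/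
open Complex ComplexConjugate Filter

lemma one_sub_cos_le (x : ℝ) : 1 - Real.cos x ≤ x^2/2 := by
  have h1 := Real.sin_sq_eq_half_sub (x/2)
  have h2 : |Real.sin (x/2)| ≤ |x/2| := Real.abs_sin_le_abs
  have h3 : Real.sin (x/2)^2 ≤ (x/2)^2 := by
    have e1 := _root_.sq_abs (Real.sin (x/2)); have e2 := _root_.sq_abs (x/2)
    nlinarith [abs_nonneg (Real.sin (x/2)), abs_nonneg (x/2)]
  have h4 : 2*(x/2) = x := by ring
  rw [h4] at h1
  nlinarith

lemma normSq_id (z w : ℂ) :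
    Complex.normSq (z - w) =
      Complex.normSq (1 - conj w * z) - (1 - Complex.normSq z) * (1 - Complex.normSq w) := by
  simp only [Complex.normSq_apply, Complex.sub_re, Complex.sub_im, Complex.mul_re, Complex.mul_im,
    Complex.one_re, Complex.one_im, Complex.conj_re, Complex.conj_im]
  ring

lemma angle_choice (n : ℕ) (hn : 1 ≤ n) (θ : ℝ) :
    ∃ ℓ : ℕ, ℓ < n ∧ Real.cos (Real.pi / n) ≤ Real.cos (θ - 2*Real.pi*ℓ/n) := by
  have hπ := Real.pi_pos
  have hn0 : (0:ℝ) < n := by exact_mod_cast hn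
  have hnz : (n:ℤ) ≠ 0 := by exact_mod_cast Nat.one_le_iff_ne_zero.mp hn
  set q : ℤ := round (θ * n / (2*Real.pi)) with hq
  have h0 : 0 ≤ q % (n:ℤ) := Int.emod_nonneg q hnz
  have h1 : q % (n:ℤ) < (n:ℤ) := Int.emod_lt_of_pos q (by exact_mod_cast hn)
  refine ⟨(q % (n:ℤ)).toNat, by omega, ?_⟩
  have hde := Int.mul_ediv_add_emod q (n:ℤ)
  have hcast : ((q % (n:ℤ)).toNat : ℝ) = (q:ℝ) - (n:ℝ)*((q / (n:ℤ) : ℤ):ℝ) := by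
    have : ((q % (n:ℤ)).toNat : ℤ) = q - (n:ℤ)*(q / (n:ℤ)) := by omega
    exact_mod_cast congrArg (Int.cast : ℤ → ℝ) this
  have heq : θ - 2*Real.pi*((q % (n:ℤ)).toNat : ℝ)/n
      = (θ - 2*Real.pi*q/n) + ((q / (n:ℤ) : ℤ):ℝ)*(2*Real.pi) := by
    rw [hcast]; field_simp; ring
  rw [heq, Real.cos_add_int_mul_two_pi]
  have habs : |θ - 2*Real.pi*q/n| ≤ Real.pi/n := by
    have h := abs_sub_round (θ * n / (2*Real.pi))
    have e : θ - 2*Real.pi*q/n = (2*Real.pi/n)*(θ*n/(2*Real.pi) - q) := by field_simp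
    rw [e, abs_mul, abs_of_pos (by positivity)]
    calc (2*Real.pi/n) * |θ*n/(2*Real.pi) - q| ≤ (2*Real.pi/n) * (1/2) :=
          mul_le_mul_of_nonneg_left h (by positivity)
      _ = Real.pi/n := by ring
  calc Real.cos (Real.pi/n) ≤ Real.cos |θ - 2*Real.pi*q/n| :=
        Real.cos_le_cos_of_nonneg_of_le_pi (abs_nonneg _)
          (div_le_self hπ.le (by exact_mod_cast hn)) habs
    _ = Real.cos (θ - 2*Real.pi*q/n) := Real.cos_abs _

lemma normSq_formula (r rk θ ψ : ℝ) :
    Complex.normSq (1 - conj ((rk:ℂ) * Complex.exp ((ψ:ℂ)*Complex.I)) *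
        ((r:ℂ)*Complex.exp ((θ:ℂ)*Complex.I)))
      = 1 - 2*r*rk*Real.cos (θ-ψ) + (r*rk)^2 := by
  rw [Complex.exp_mul_I, Complex.exp_mul_I]
  simp only [← Complex.ofReal_cos, ← Complex.ofReal_sin]
  simp only [Complex.normSq_apply, Complex.sub_re, Complex.sub_im, Complex.mul_re, Complex.mul_im,
    Complex.add_re, Complex.add_im, Complex.one_re, Complex.one_im, Complex.ofReal_re,
    Complex.ofReal_im, Complex.I_re, Complex.I_im, map_mul, Complex.conj_ofReal,
    Complex.conj_re, Complex.conj_im, Complex.mul_conj]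
  rw [Real.cos_sub]
  have hθ := Real.sin_sq_add_cos_sq θ
  have hψ := Real.sin_sq_add_cos_sq ψ
  linear_combination ((r*rk)^2*(Real.sin θ^2+Real.cos θ^2))*hψ + (r*rk)^2*hθ

lemma step6 (X c B : ℝ) (hX : 0 ≤ X) (h : 1 - c ≤ B/2) :
    1 - 2*X*c + X^2 ≤ (1-X)^2 + X*B := by
  nlinarith [mul_le_mul_of_nonneg_left h hX]

lemma pos2 (X c : ℝ) (hX : 0 ≤ X) (hX1 : X < 1) (hc : c ≤ 1) :
    0 < 1 - 2*X*c + X^2 := by nlinarith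

lemma mul_lt_one_aux (r rk : ℝ) (h0 : 0 ≤ r) (h1 : r < 1) (h2 : 0 ≤ rk) (h3 : rk < 1) :
    r*rk < 1 := by nlinarith

lemma claimA (a S T r rk : ℝ) (ha : 1 < a) (hT1 : 1 ≤ T) (hTS : T ≤ S) (hSa : S ≤ a^2*T)
    (hr : r = (S-1)/(S+1)) (hrk : rk = (T-1)/(T+1)) :
    (1 - r*rk)^2 ≤ (1 + (a-a⁻¹)^2/4) * ((1-r^2)*(1-rk^2)) := by
  have ha0 : 0 < a := by linarith
  have haa : a*a⁻¹ = 1 := mul_inv_cancel₀ (ne_of_gt ha0)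
  have hS1 : 1 ≤ S := le_trans hT1 hTS
  have hS0 : (0:ℝ) < S+1 := by linarith
  have hT0 : (0:ℝ) < T+1 := by linarith
  subst hr hrk
  have e1 : (1 - (S-1)/(S+1)*((T-1)/(T+1)))^2 = (2*(S+T))^2/((S+1)^2*(T+1)^2) := by
    field_simp <;> ring
  have e2 : (1-((S-1)/(S+1))^2)*(1-((T-1)/(T+1))^2) = 16*(S*T)/((S+1)^2*(T+1)^2) := by
    field_simp <;> ring
  rw [e1, e2, ← mul_div_assoc, div_le_div_iff_of_pos_right (by positivity)]
  have hinv1 : a⁻¹ ≤ 1 := by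
    rw [inv_le_one_iff₀]; right; linarith
  have hinv0 : 0 < a⁻¹ := by positivity
  have haa2 : a^2*(a⁻¹)^2 = 1 := by rw [← mul_pow, haa]; norm_num
  have key : 0 ≤ (a^2*T - S)*(S - a⁻¹^2*T) := by
    apply mul_nonneg (by linarith)
    nlinarith [mul_nonneg (sub_nonneg.2 (show a⁻¹^2 ≤ 1 by nlinarith))
      (show (0:ℝ) ≤ T by linarith)]
  have e3 : a^2*a⁻¹^2*T^2 = T^2 := by rw [haa2, one_mul]
  have e4 : a*a⁻¹*(S*T) = S*T := by rw [haa, one_mul]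
  nlinarith [key, e3, e4]

lemma claimB (a α S T r rk nn : ℝ) (ha : 1 < a) (hα : 0 < α)
    (hT1 : 1 ≤ T) (hTS : T ≤ S) (hSa : S ≤ a^2*T)
    (hn1 : 1 ≤ nn) (hcase : α*T ≤ nn ∨ T = 1)
    (hr : r = (S-1)/(S+1)) (hrk : rk = (T-1)/(T+1)) :
    r*rk*(Real.pi^2/nn^2) ≤ (Real.pi^2*a^2/(4*α^2)) * ((1-r^2)*(1-rk^2)) := by
  have ha0 : 0 < a := by linarith
  have hS1 : 1 ≤ S := le_trans hT1 hTS
  have hS0 : (0:ℝ) < S+1 := by linarith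
  have hT0 : (0:ℝ) < T+1 := by linarith
  have hnn0 : (0:ℝ) < nn := by linarith
  have hπ := Real.pi_pos
  subst hr hrk
  have e1 : (S-1)/(S+1)*((T-1)/(T+1))*(Real.pi^2/nn^2)
      = ((S-1)*(T-1)*Real.pi^2)/((S+1)*(T+1)*nn^2) := by field_simp <;> ring
  have e2 : (Real.pi^2*a^2/(4*α^2))*((1-((S-1)/(S+1))^2)*(1-((T-1)/(T+1))^2))
      = (Real.pi^2*a^2*(16*(S*T)))/((4*α^2)*((S+1)^2*(T+1)^2)) := by field_simp <;> ring
  rw [e1, e2, div_le_div_iff₀ (by positivity) (by positivity)]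
  rcases hcase with hαT | hT
  · have hT0' : (0:ℝ) < T := by linarith
    have hn2 : α^2*T^2 ≤ nn^2 := by nlinarith [mul_pos hα hT0']
    have h1 : S^2 - 1 ≤ a^2*T*S := by nlinarith [hS1]
    have h2 : T^2-1 ≤ T^2 := by linarith
    have hstep : (S^2-1)*(T^2-1) ≤ (a^2*T*S)*(T^2) :=
      mul_le_mul h1 h2 (by nlinarith) (by positivity)
    have hcore : 4*α^2*((S^2-1)*(T^2-1)) ≤ 16*a^2*S*T*nn^2 := by
      calc 4*α^2*((S^2-1)*(T^2-1)) ≤ 4*α^2*((a^2*T*S)*(T^2)) :=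
            mul_le_mul_of_nonneg_left hstep (by positivity)
        _ = 4*a^2*S*T*(α^2*T^2) := by ring
        _ ≤ 4*a^2*S*T*nn^2 := mul_le_mul_of_nonneg_left hn2 (by positivity)
        _ ≤ 16*a^2*S*T*nn^2 := by
            have hX : (0:ℝ) ≤ a^2*S*T*nn^2 :=
              mul_nonneg (mul_nonneg (mul_nonneg (sq_nonneg a) (by linarith)) (by linarith))
                (sq_nonneg nn)
            linarith
    have hpos : (0:ℝ) ≤ Real.pi^2*((S+1)*(T+1)) := by positivity
    calc (S-1)*(T-1)*Real.pi^2*(4*α^2*((S+1)^2*(T+1)^2))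
        = 4*α^2*((S^2-1)*(T^2-1)) * (Real.pi^2*((S+1)*(T+1))) := by ring
      _ ≤ 16*a^2*S*T*nn^2 * (Real.pi^2*((S+1)*(T+1))) :=
          mul_le_mul_of_nonneg_right hcore hpos
      _ = Real.pi^2*a^2*(16*(S*T))*((S+1)*(T+1)*nn^2) := by ring
  · subst hT
    have h0 : (0:ℝ) ≤ Real.pi^2*a^2*(16*(S*1))*((S+1)*(1+1)*nn^2) := by positivity
    nlinarith [h0]

set_option maxHeartbeats 1000000 in
/-- Theorem 2.1, part 2: if `a > 1`, `N(0) = 1`, and `(N(k) a^{-2k})_{k ≥ 1}` is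
decreasing with limit `α ∈ (0,∞)`, then with
`K = 1 + (a - a⁻¹)²/4 + π²a²/(4α²)` and `ε₀ = √(1 - 1/K)` one has `ε₀ ∈ (0,1)`
and every `z ∈ 𝔻` is within pseudohyperbolic distance `ε₀` of a point of `𝒜`;
in particular `𝒜` is an `ε`-net for every `ε ∈ (ε₀, 1)`. -/
theorem nodes_eps_net (a : ℝ) (ha : 1 < a) (N : ℕ → ℕ) (hN0 : N 0 = 1)
    (hdec : ∀ k, 1 ≤ k →
      (N (k + 1) : ℝ) * (a ^ (2 * (k + 1)))⁻¹ ≤ (N k : ℝ) * (a ^ (2 * k))⁻¹)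
    (α : ℝ) (hαpos : 0 < α)
    (hα : Tendsto (fun k : ℕ => (N k : ℝ) * (a ^ (2 * k))⁻¹) atTop (nhds α)) :
    0 < Real.sqrt (1 - 1 / (1 + (a - a⁻¹) ^ 2 / 4 + Real.pi ^ 2 * a ^ 2 / (4 * α ^ 2))) ∧
    Real.sqrt (1 - 1 / (1 + (a - a⁻¹) ^ 2 / 4 + Real.pi ^ 2 * a ^ 2 / (4 * α ^ 2))) < 1 ∧
    (∀ z : ℂ, ‖z‖ < 1 →
      ∃ w ∈ {w : ℂ | ∃ k ℓ, ℓ < N k ∧ w = zPt a N k ℓ},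
        ‖z - w‖ / ‖1 - conj w * z‖ ≤
          Real.sqrt (1 - 1 / (1 + (a - a⁻¹) ^ 2 / 4 + Real.pi ^ 2 * a ^ 2 / (4 * α ^ 2)))) ∧
    (∀ ε : ℝ,
      Real.sqrt (1 - 1 / (1 + (a - a⁻¹) ^ 2 / 4 + Real.pi ^ 2 * a ^ 2 / (4 * α ^ 2))) < ε →
      ε < 1 →
      ∀ z : ℂ, ‖z‖ < 1 →
        ∃ w ∈ {w : ℂ | ∃ k ℓ, ℓ < N k ∧ w = zPt a N k ℓ},
          ‖z - w‖ / ‖1 - conj w * z‖ < ε) := by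
  classical
  have hπ := Real.pi_pos
  have ha0 : (0:ℝ) < a := lt_trans one_pos ha
  set Kc := 1 + (a - a⁻¹) ^ 2 / 4 + Real.pi ^ 2 * a ^ 2 / (4 * α ^ 2) with hKc
  have hK1 : 1 < Kc := by
    have h2 : 0 < Real.pi^2*a^2/(4*α^2) := by positivity
    have h3 : 0 ≤ (a-a⁻¹)^2/4 := by positivity
    rw [hKc]; linarith
  have hKpos : (0:ℝ) < Kc := by linarith
  have h1K : 1/Kc < 1 := by rw [div_lt_one hKpos]; exact hK1
  have h1K0 : 0 < 1/Kc := by positivity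
  have hε0 : 0 < Real.sqrt (1 - 1/Kc) := Real.sqrt_pos.2 (by linarith)
  have hε1 : Real.sqrt (1 - 1/Kc) < 1 := by
    rw [Real.sqrt_lt' one_pos, one_pow]; linarith
  -- antitone bound on N
  have hge : ∀ j, 1 ≤ j → α ≤ (N j : ℝ) * (a^(2*j))⁻¹ := by
    intro j hj
    apply le_of_tendsto hα
    rw [eventually_atTop]
    refine ⟨j, fun i hi => ?_⟩
    induction i, hi using Nat.le_induction with
    | base => exact le_refl _
    | succ i hji ih => exact le_trans (hdec i (le_trans hj hji)) ih
  have key : ∀ z : ℂ, ‖z‖ < 1 →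
      ∃ w ∈ {w : ℂ | ∃ k ℓ, ℓ < N k ∧ w = zPt a N k ℓ},
        ‖z - w‖ / ‖1 - conj w * z‖ ≤ Real.sqrt (1 - 1/Kc) := by
    intro z hz
    set r := ‖z‖ with hrr
    have hr0 : 0 ≤ r := norm_nonneg z
    have hr1 : r < 1 := hz
    have h1r : (0:ℝ) < 1 - r := by linarith
    set S := (1+r)/(1-r) with hSdef
    have hS1 : 1 ≤ S := by rw [hSdef, le_div_iff₀ h1r]; linarith
    have hSr : S*(1-r) = 1+r := by rw [hSdef]; field_simp
    have hS0 : (0:ℝ) < S+1 := by linarith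
    have hr_eq : r = (S-1)/(S+1) := by
      rw [eq_div_iff (ne_of_gt hS0)]; linear_combination (-1 : ℝ) * hSr
    -- choose k
    have ha2 : 1 < a^2 := by nlinarith [ha]
    obtain ⟨M, hM⟩ := pow_unbounded_of_one_lt S ha2
    have hex : ∃ m : ℕ, S < a^(2*m) := ⟨M, by rw [pow_mul]; exact hM⟩
    have hspec : S < a^(2*(Nat.find hex)) := Nat.find_spec hex
    have hm0 : Nat.find hex ≠ 0 := by
      intro h; rw [h] at hspec; norm_num at hspec; linarith
    obtain ⟨k, hk⟩ : ∃ k, Nat.find hex = k+1 := ⟨Nat.find hex - 1, by omega⟩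
    have hkm : ¬ S < a^(2*k) := Nat.find_min hex (by omega)
    set T := a^(2*k) with hT
    have hT1 : 1 ≤ T := one_le_pow₀ (le_of_lt ha)
    have hT0 : (0:ℝ) < T+1 := by linarith
    have hTS : T ≤ S := not_lt.1 hkm
    have hSa : S ≤ a^2*T := by
      have h5 : S < a^(2*(k+1)) := by rw [← hk]; exact hspec
      have h6 : a^(2*(k+1)) = a^2*T := by rw [hT, ← pow_add]; congr 1; omega
      linarith [h6 ▸ h5]
    -- rk
    have hak : (0:ℝ) < a^k := pow_pos ha0 k
    set rk := rPt a k with hrkdef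
    have hrk_eq : rk = (T-1)/(T+1) := by
      rw [hrkdef, rPt, hT]
      have h2 : a^(2*k) = a^k*a^k := by rw [← pow_add]; congr 1; omega
      have h3 : (0:ℝ) < a^k + (a^k)⁻¹ := by positivity
      rw [h2]; field_simp
    have hrk0 : 0 ≤ rk := by rw [hrk_eq]; apply div_nonneg <;> linarith
    have hrk1 : rk < 1 := by rw [hrk_eq, div_lt_one hT0]; linarith
    -- n
    have hcase : α*T ≤ (N k : ℝ) ∨ T = 1 := by
      rcases Nat.eq_zero_or_pos k with hk0 | hk1
      · right; rw [hT, hk0]; norm_num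
      · left
        have h5 := hge k hk1
        rw [← hT] at h5
        have hTpos : (0:ℝ) < T := by linarith
        have h6 := mul_le_mul_of_nonneg_right h5 (le_of_lt hTpos)
        rwa [mul_assoc, inv_mul_cancel₀ (ne_of_gt hTpos), mul_one] at h6
    have hn1 : 1 ≤ N k := by
      rcases Nat.eq_zero_or_pos k with hk0 | hk1
      · rw [hk0, hN0]
      · rcases hcase with h | h
        · by_contra hcon
          have h7 : N k = 0 := by omega
          rw [h7] at h
          have : (0:ℝ) < α*T := mul_pos hαpos (by linarith)
          norm_num at h; linarith
        · exfalso
          have : (1:ℝ) < T := by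
            rw [hT]
            exact one_lt_pow₀ ha (by omega)
          linarith
    -- angle
    obtain ⟨ℓ, hℓn, hcos⟩ := angle_choice (N k) hn1 (Complex.arg z)
    set θ := Complex.arg z with hθ
    set ψ := 2*Real.pi*(ℓ:ℝ)/(N k : ℝ) with hψ
    set w := zPt a N k ℓ with hw
    have hwe : w = (rk:ℂ) * Complex.exp ((ψ:ℂ)*Complex.I) := by
      rw [hw, zPt, ← hrkdef]
      congr 1
      rw [hψ]; push_cast; ring
    have hzz : z = (r:ℂ) * Complex.exp ((θ:ℂ)*Complex.I) := by
      rw [hrr, hθ]; exact (Complex.norm_mul_exp_arg_mul_I z).symm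
    have hnsq1 : Complex.normSq (1 - conj w * z) = 1 - 2*r*rk*Real.cos (θ-ψ) + (r*rk)^2 := by
      rw [hwe]
      nth_rewrite 1 [hzz]
      exact normSq_formula r rk θ ψ
    have hnsqz : Complex.normSq z = r^2 := by rw [← Complex.sq_norm, ← hrr]
    have hnsqw : Complex.normSq w = rk^2 := by
      rw [hwe, Complex.normSq_mul, Complex.normSq_ofReal,
        ← Complex.sq_norm (Complex.exp _), Complex.norm_exp_ofReal_mul_I]
      ring
    have hnr : (1:ℝ) ≤ (N k : ℝ) := by exact_mod_cast hn1
    clear_value r S T rk θ ψ w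
    have hnpos : (0:ℝ) < (N k : ℝ) := by linarith
    have hA := claimA a S T r rk ha hT1 hTS hSa hr_eq hrk_eq
    have hB := claimB a α S T r rk ((N k : ℝ)) ha hαpos hT1 hTS hSa hnr hcase hr_eq hrk_eq
    have hcos2 : 1 - Real.cos (Real.pi/(N k : ℝ)) ≤ (Real.pi/(N k : ℝ))^2/2 :=
      one_sub_cos_le _
    have hmain : Complex.normSq (1 - conj w * z) ≤ Kc * ((1-r^2)*(1-rk^2)) := by
      rw [hnsq1]
      have hrrk : 0 ≤ r*rk := mul_nonneg hr0 hrk0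
      have h9 : 1 - Real.cos (θ-ψ) ≤ Real.pi^2/(N k : ℝ)^2/2 := by
        have h8 : (Real.pi/(N k : ℝ))^2/2 = Real.pi^2/(N k : ℝ)^2/2 := by ring
        rw [h8] at hcos2
        linarith [hcos]
      have h6 : 1 - 2*r*rk*Real.cos (θ-ψ) + (r*rk)^2
          ≤ (1-r*rk)^2 + r*rk*(Real.pi^2/(N k : ℝ)^2) := by
        have := step6 (r*rk) (Real.cos (θ-ψ)) (Real.pi^2/(N k : ℝ)^2) hrrk h9
        linarith
      calc 1 - 2*r*rk*Real.cos (θ-ψ) + (r*rk)^2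
          ≤ (1-r*rk)^2 + r*rk*(Real.pi^2/(N k : ℝ)^2) := h6
        _ ≤ (1 + (a-a⁻¹)^2/4)*((1-r^2)*(1-rk^2))
            + (Real.pi^2*a^2/(4*α^2))*((1-r^2)*(1-rk^2)) := add_le_add hA hB
        _ = Kc * ((1-r^2)*(1-rk^2)) := by rw [hKc]; ring
    have hX1 : r*rk < 1 := mul_lt_one_aux r rk hr0 hr1 hrk0 hrk1
    have hpos2 : 0 < Complex.normSq (1 - conj w * z) := by
      rw [hnsq1]
      have := pos2 (r*rk) (Real.cos (θ-ψ)) (mul_nonneg hr0 hrk0) hX1 (Real.cos_le_one _)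
      linarith
    have hid := normSq_id z w
    rw [hnsqz, hnsqw] at hid
    refine ⟨w, ⟨k, ℓ, hℓn, hw⟩, ?_⟩
    have hfrac : Complex.normSq (z-w) / Complex.normSq (1 - conj w * z) ≤ 1 - 1/Kc := by
      rw [div_le_iff₀ hpos2]
      have hPF : Complex.normSq (1 - conj w * z)/Kc ≤ (1-r^2)*(1-rk^2) := by
        rw [div_le_iff₀ hKpos]; exact le_trans hmain (le_of_eq (mul_comm _ _))
      have hexp : (1 - 1/Kc)*Complex.normSq (1 - conj w * z)
          = Complex.normSq (1 - conj w * z) - Complex.normSq (1 - conj w * z)/Kc := by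
        ring
      linarith [hid]
    have habs : ‖z-w‖ / ‖1 - conj w * z‖
        = Real.sqrt (Complex.normSq (z-w) / Complex.normSq (1 - conj w * z)) := by
      rw [Complex.norm_def, Complex.norm_def, ← Real.sqrt_div (Complex.normSq_nonneg _)]
    rw [habs]
    exact Real.sqrt_le_sqrt hfrac
  refine ⟨hε0, hε1, key, ?_⟩
  intro ε hε hε1' z hz
  obtain ⟨w, hwmem, hle⟩ := key z hz
  exact ⟨w, hwmem, lt_of_le_of_lt hle hε⟩
end

section
/- Let a > 1, r_k = (aᵏ − a^{−k})/(aᵏ + a^{−k}) with k ≥ 1, and N = N(k) ≥ 1 a natural number. Then for any two distinct points z_{kℓ} = r_k e^{2πiℓ/N} and z_{kn} = r_k e^{2πin/N} on the same circle (0 ≤ ℓ ≠ n ≤ N−1), the pseudohyperbolic distance satisfies ρ(z_{kℓ}, z_{kn}) ≥ {1 + [(1 − r_k²)N/(4 r_k)]²}^{−1/2}. -/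
open Complex ComplexConjugate

/-- Lower bound for `sin (π m / N)` when `1 ≤ m < N` and `2 m ≤ N`. -/
lemma sin_bound_half (m N : ℕ) (h1 : 1 ≤ m) (h2 : 2 * m ≤ N) :
    (2 : ℝ) / N ≤ Real.sin (Real.pi * m / N) := by
  have hN : (0 : ℝ) < N := by
    have : 0 < N := by omega
    exact_mod_cast this
  have hx0 : (0 : ℝ) ≤ Real.pi * m / N := by positivity
  have hx : Real.pi * m / N ≤ Real.pi / 2 := by
    rw [div_le_div_iff₀ hN two_pos]
    have : (2 : ℝ) * m ≤ N := by exact_mod_cast h2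
    nlinarith [Real.pi_pos]
  have hsin := Real.mul_le_sin hx0 hx
  have hm1 : (1 : ℝ) ≤ m := by exact_mod_cast h1
  have heq : 2 / Real.pi * (Real.pi * m / N) = 2 * m / N := by
    field_simp
  have hkey : (2 : ℝ) / N ≤ 2 * m / N := by
    gcongr
    linarith
  linarith [heq ▸ hsin]

/-- Lower bound for `sin (π m / N)` when `1 ≤ m < N`. -/
lemma sin_bound (m N : ℕ) (h1 : 1 ≤ m) (h2 : m < N) :
    (2 : ℝ) / N ≤ Real.sin (Real.pi * m / N) := by
  rcases le_or_gt (2 * m) N with h | h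
  · exact sin_bound_half m N h1 h
  · have hN : (0 : ℝ) < N := by
      have : 0 < N := by omega
      exact_mod_cast this
    have hm' : 1 ≤ N - m := by omega
    have h2m' : 2 * (N - m) ≤ N := by omega
    have := sin_bound_half (N - m) N hm' h2m'
    have heq : Real.sin (Real.pi * m / N) = Real.sin (Real.pi * ↑(N - m) / N) := by
      have hcast : (↑(N - m) : ℝ) = N - m := by
        push_cast [Nat.cast_sub h2.le]; ring
      rw [hcast]
      rw [show Real.pi * ((N : ℝ) - m) / N = Real.pi - Real.pi * m / N by
        field_simp]
      rw [Real.sin_pi_sub]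
    rw [heq]; exact this

lemma abs_exp_sub_exp (x y : ℝ) :
    ‖Complex.exp (↑x * Complex.I) - Complex.exp (↑y * Complex.I)‖ =
      2 * |Real.sin ((x - y) / 2)| := by
  rw [Complex.exp_mul_I, Complex.exp_mul_I]
  have : (Complex.cos ↑x + Complex.sin ↑x * Complex.I) -
        (Complex.cos ↑y + Complex.sin ↑y * Complex.I) =
      ↑(Real.cos x - Real.cos y) + ↑(Real.sin x - Real.sin y) * Complex.I := by
    push_cast [← Complex.ofReal_cos, ← Complex.ofReal_sin]
    ring
  rw [this, Complex.norm_add_mul_I]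
  rw [show 2 * |Real.sin ((x - y) / 2)| = Real.sqrt ((2 * |Real.sin ((x - y) / 2)|) ^ 2) by
    rw [Real.sqrt_sq (by positivity)]]
  congr 1
  have h1 := Real.sin_sq_eq_half_sub ((x - y) / 2)
  have h2 := Real.cos_sub x y
  have h3 := Real.sin_sq_add_cos_sq x
  have h4 := Real.sin_sq_add_cos_sq y
  have h5 : |Real.sin ((x - y) / 2)| ^ 2 = Real.sin ((x - y) / 2) ^ 2 := sq_abs _
  rw [show 2 * ((x - y) / 2) = x - y by ring] at h1
  nlinarith

set_option maxHeartbeats 1000000 in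
/-- Points on the same circle of radius `r_k`: for distinct `ℓ, n < N`,
`ρ(z_{kℓ}, z_{kn}) ≥ {1 + [(1 - r_k²) N / (4 r_k)]²}^{-1/2}`. -/
theorem dist_same_circle (a : ℝ) (ha : 1 < a) (k : ℕ) (hk : 1 ≤ k)
    (N : ℕ) (hN : 1 ≤ N) (ℓ n : ℕ) (hℓ : ℓ < N) (hn : n < N) (hℓn : ℓ ≠ n) :
    1 / Real.sqrt (1 + ((1 - rPt a k ^ 2) * N / (4 * rPt a k)) ^ 2) ≤
      ‖(rPt a k : ℂ) * Complex.exp (2 * Real.pi * Complex.I * ℓ / N) -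
          (rPt a k : ℂ) * Complex.exp (2 * Real.pi * Complex.I * n / N)‖ /
        ‖1 - conj ((rPt a k : ℂ) * Complex.exp (2 * Real.pi * Complex.I * n / N)) *
          ((rPt a k : ℂ) * Complex.exp (2 * Real.pi * Complex.I * ℓ / N))‖ := by
  set r := rPt a k with hrdef
  -- basic facts on r
  have ht : 1 < a ^ k := one_lt_pow₀ ha (by omega)
  have ht0 : 0 < a ^ k := by linarith
  have hti : (a ^ k)⁻¹ < 1 := inv_lt_one_of_one_lt₀ ht
  have hti0 : 0 < (a ^ k)⁻¹ := by positivity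
  have hr0 : 0 < r := by
    rw [hrdef, rPt]
    apply div_pos <;> linarith
  have hr1 : r < 1 := by
    rw [hrdef, rPt]
    rw [div_lt_one (by linarith)]
    linarith
  have hNpos : (0 : ℝ) < N := by positivity
  -- angles
  set x : ℝ := 2 * Real.pi * ℓ / N with hxdef
  set y : ℝ := 2 * Real.pi * n / N with hydef
  have hxc : (2 * ↑Real.pi * Complex.I * ↑ℓ / ↑N : ℂ) = ↑x * Complex.I := by
    rw [hxdef]; push_cast; ring
  have hyc : (2 * ↑Real.pi * Complex.I * ↑n / ↑N : ℂ) = ↑y * Complex.I := by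
    rw [hydef]; push_cast; ring
  rw [hxc, hyc]
  set s : ℝ := Real.sin ((x - y) / 2) with hsdef
  -- numerator
  have hnum : ‖(r : ℂ) * Complex.exp (↑x * Complex.I) -
      (r : ℂ) * Complex.exp (↑y * Complex.I)‖ = 2 * r * |s| := by
    rw [← mul_sub, norm_mul, Complex.norm_real, Real.norm_eq_abs, abs_of_pos hr0, abs_exp_sub_exp]
    ring
  -- denominator
  set θ : ℝ := x - y with hθdef
  have hden : ‖1 - conj ((r : ℂ) * Complex.exp (↑y * Complex.I)) *
      ((r : ℂ) * Complex.exp (↑x * Complex.I))‖ =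
      Real.sqrt ((1 - r ^ 2) ^ 2 + 4 * r ^ 2 * s ^ 2) := by
    have hconj : conj ((r : ℂ) * Complex.exp (↑y * Complex.I)) =
        (r : ℂ) * Complex.exp (-(↑y * Complex.I)) := by
      rw [map_mul, Complex.conj_ofReal, ← Complex.exp_conj]
      congr 1
      rw [map_mul, Complex.conj_ofReal, Complex.conj_I]
      ring
    rw [hconj]
    have hprod : (r : ℂ) * Complex.exp (-(↑y * Complex.I)) *
        ((r : ℂ) * Complex.exp (↑x * Complex.I)) =
        ((r ^ 2 : ℝ) : ℂ) * Complex.exp (↑θ * Complex.I) := by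
      rw [show (r : ℂ) * Complex.exp (-(↑y * Complex.I)) *
          ((r : ℂ) * Complex.exp (↑x * Complex.I)) =
          ((r ^ 2 : ℝ) : ℂ) * (Complex.exp (-(↑y * Complex.I)) * Complex.exp (↑x * Complex.I))
          from by push_cast; ring, ← Complex.exp_add]
      congr 1
      rw [hθdef]; push_cast; ring
    rw [hprod, Complex.exp_mul_I]
    have hsplit : (1 : ℂ) - ((r ^ 2 : ℝ) : ℂ) * (Complex.cos ↑θ + Complex.sin ↑θ * Complex.I) =
        Complex.ofReal (1 - r ^ 2 * Real.cos θ) +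
          Complex.ofReal (-(r ^ 2 * Real.sin θ)) * Complex.I := by
      push_cast [Complex.ofReal_cos, Complex.ofReal_sin]
      ring
    rw [hsplit, Complex.norm_add_mul_I]
    congr 1
    have hc : Real.cos θ = 1 - 2 * s ^ 2 := by
      have h1 := Real.sin_sq_eq_half_sub (θ / 2)
      rw [show 2 * (θ / 2) = θ by ring] at h1
      rw [hsdef]
      linarith
    have hs2 : Real.sin θ ^ 2 = 4 * s ^ 2 - 4 * s ^ 4 := by
      have := Real.sin_sq_add_cos_sq θ
      nlinarith
    rw [hc]
    linear_combination r ^ 4 * hs2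
  rw [hnum, hden]
  -- bound on |s|
  have hs_bound : 2 / (N : ℝ) ≤ |s| := by
    have key : ∀ m : ℕ, 1 ≤ m → m < N → (2 : ℝ) / N ≤ Real.sin (Real.pi * m / N) :=
      fun m h1 h2 => sin_bound m N h1 h2
    rcases lt_or_gt_of_ne hℓn with hlt | hlt
    · -- ℓ < n : (x - y)/2 = -π(n-ℓ)/N
      have hm1 : 1 ≤ n - ℓ := by omega
      have hm2 : n - ℓ < N := by omega
      have harg : (x - y) / 2 = -(Real.pi * ↑(n - ℓ) / N) := by
        rw [hxdef, hydef]
        push_cast [Nat.cast_sub hlt.le]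
        field_simp
        ring
      rw [hsdef, harg, Real.sin_neg, abs_neg]
      calc (2 : ℝ) / N ≤ Real.sin (Real.pi * ↑(n - ℓ) / N) := key _ hm1 hm2
        _ ≤ |Real.sin (Real.pi * ↑(n - ℓ) / N)| := le_abs_self _
    · -- n < ℓ
      have hm1 : 1 ≤ ℓ - n := by omega
      have hm2 : ℓ - n < N := by omega
      have harg : (x - y) / 2 = Real.pi * ↑(ℓ - n) / N := by
        rw [hxdef, hydef]
        push_cast [Nat.cast_sub hlt.le]
        field_simp
      rw [hsdef, harg]
      calc (2 : ℝ) / N ≤ Real.sin (Real.pi * ↑(ℓ - n) / N) := key _ hm1 hm2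
        _ ≤ |Real.sin (Real.pi * ↑(ℓ - n) / N)| := le_abs_self _
  -- the real inequality
  set C : ℝ := (1 - r ^ 2) * N / (4 * r) with hCdef
  have hs_pos : 0 < |s| := lt_of_lt_of_le (by positivity) hs_bound
  have h1r : 0 < 1 - r ^ 2 := by nlinarith
  have hD : (0 : ℝ) < (1 - r ^ 2) ^ 2 + 4 * r ^ 2 * s ^ 2 := by positivity
  have hsN : (2 : ℝ) ≤ |s| * N := by
    rw [div_le_iff₀ hNpos] at hs_bound; linarith
  have hexp : (2 * r * |s|) ^ 2 * (1 + C ^ 2) =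
      4 * r ^ 2 * |s| ^ 2 + |s| ^ 2 * N ^ 2 * (1 - r ^ 2) ^ 2 / 4 := by
    rw [hCdef]
    field_simp
    ring
  have hkey : (1 - r ^ 2) ^ 2 + 4 * r ^ 2 * s ^ 2 ≤ (2 * r * |s|) ^ 2 * (1 + C ^ 2) := by
    rw [hexp]
    have h4 : (4 : ℝ) ≤ (|s| * N) ^ 2 := by nlinarith [hsN]
    have hss : |s| ^ 2 = s ^ 2 := _root_.sq_abs s
    nlinarith [mul_le_mul_of_nonneg_left h4 (sq_nonneg (1 - r ^ 2)), hss, sq_nonneg (|s| * N)]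
  have hsqrt1 : (0 : ℝ) < Real.sqrt (1 + C ^ 2) := Real.sqrt_pos.mpr (by positivity)
  have hsqrtD : (0 : ℝ) < Real.sqrt ((1 - r ^ 2) ^ 2 + 4 * r ^ 2 * s ^ 2) :=
    Real.sqrt_pos.mpr hD
  rw [div_le_div_iff₀ hsqrt1 hsqrtD, one_mul]
  calc Real.sqrt ((1 - r ^ 2) ^ 2 + 4 * r ^ 2 * s ^ 2)
      ≤ Real.sqrt ((2 * r * |s|) ^ 2 * (1 + C ^ 2)) := Real.sqrt_le_sqrt hkey
    _ = 2 * r * |s| * Real.sqrt (1 + C ^ 2) := by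
        rw [Real.sqrt_mul (sq_nonneg _), Real.sqrt_sq (by positivity)]
end

section
/- Let a > 1 and r_k = (aᵏ − a^{−k})/(aᵏ + a^{−k}) for k ∈ ℕ. Then for every k ≥ 0 and every z ∈ 𝔻, the action of the representation operator U_{(r₁,1)⁻¹} on the normalized kernel φ_k(z) = (1 − r_k²)/(1 − r_k z)² satisfies the identity ((1 − r₁²)/(1 − r₁ z)²) · (1 − r_k²)/(1 − r_k·(z − r₁)/(1 − r₁ z))² = (1 − r_{k+1}²)/(1 − r_{k+1} z)²; i.e., U_{(r₁,1)⁻¹} maps the level-k kernel function to the level-(k+1) kernel function, so the resolution levels are nested under the hyperbolic dilation. -/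
open Complex

lemma rPt_mem (a : ℝ) (ha : 1 < a) (k : ℕ) : 0 ≤ rPt a k ∧ rPt a k < 1 := by
  have h1 : (1:ℝ) ≤ a ^ k := one_le_pow₀ ha.le
  have hp : (0:ℝ) < a ^ k := lt_of_lt_of_le one_pos h1
  have hi : (0:ℝ) < (a ^ k)⁻¹ := inv_pos.mpr hp
  have hi1 : (a ^ k)⁻¹ ≤ 1 := by
    rw [inv_le_one₀ hp]; exact h1
  have hil : (a ^ k)⁻¹ ≤ a ^ k := hi1.trans h1
  constructor
  · apply div_nonneg <;> nlinarith
  · rw [rPt, div_lt_one (by nlinarith)]; nlinarith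

lemma rPt_add (a : ℝ) (ha : 1 < a) (k : ℕ) :
    rPt a 1 + rPt a k = rPt a (k + 1) * (1 + rPt a 1 * rPt a k) := by
  have hp : (0:ℝ) < a := lt_trans one_pos ha
  have h1 : a ≠ 0 := hp.ne'
  have hk : a ^ k ≠ 0 := pow_ne_zero _ h1
  have hk1 : a ^ (k+1) ≠ 0 := pow_ne_zero _ h1
  have d1 : a + a⁻¹ ≠ 0 := by positivity
  have dk : a ^ k + (a ^ k)⁻¹ ≠ 0 := by positivity
  have dk1 : a ^ (k+1) + (a ^ (k+1))⁻¹ ≠ 0 := by positivity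
  simp only [rPt, pow_one]
  field_simp
  ring

/-- The representation operator `U_{(r₁,1)⁻¹}` maps the level-`k` normalized
kernel `φ_k(z) = (1 - r_k²)/(1 - r_k z)²` to the level-`(k+1)` kernel:
`((1 - r₁²)/(1 - r₁z)²) · (1 - r_k²)/(1 - r_k (z - r₁)/(1 - r₁z))²
  = (1 - r_{k+1}²)/(1 - r_{k+1} z)²`, so the resolution levels are nested under
the hyperbolic dilation. -/
theorem dilation_maps_kernels (a : ℝ) (ha : 1 < a) (k : ℕ) (z : ℂ)
    (hz : ‖z‖ < 1) :
    ((1 - (rPt a 1 : ℂ) ^ 2) / (1 - (rPt a 1 : ℂ) * z) ^ 2) *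
        ((1 - (rPt a k : ℂ) ^ 2) /
          (1 - (rPt a k : ℂ) * ((z - (rPt a 1 : ℂ)) / (1 - (rPt a 1 : ℂ) * z))) ^ 2) =
      (1 - (rPt a (k + 1) : ℂ) ^ 2) / (1 - (rPt a (k + 1) : ℂ) * z) ^ 2 := by
  obtain ⟨hr0, hr1⟩ := rPt_mem a ha 1
  obtain ⟨hs0, hs1⟩ := rPt_mem a ha k
  obtain ⟨ht0, ht1⟩ := rPt_mem a ha (k+1)
  set r : ℂ := (rPt a 1 : ℂ)
  set s : ℂ := (rPt a k : ℂ)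
  set t : ℂ := (rPt a (k+1) : ℂ)
  have hc : r + s = t * (1 + r * s) := by
    have := rPt_add a ha k
    push_cast [r, s, t]
    exact_mod_cast congrArg (Complex.ofReal ·) this
  have habs : ∀ x : ℝ, 0 ≤ x → x < 1 → 1 - (x:ℂ) * z ≠ 0 := by
    intro x hx0 hx1 h
    have : ‖(x:ℂ) * z‖ < 1 := by
      rw [norm_mul, Complex.norm_real, Real.norm_of_nonneg hx0]
      calc x * ‖z‖ ≤ 1 * ‖z‖ := by
            apply mul_le_mul_of_nonneg_right hx1.le (norm_nonneg z)
        _ = ‖z‖ := one_mul _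
        _ < 1 := hz
    have h2 : (x:ℂ) * z = 1 := by linear_combination -h
    rw [h2] at this; simp at this
  have h1 : 1 - r * z ≠ 0 := habs _ hr0 hr1
  have h2 : 1 - t * z ≠ 0 := habs _ ht0 ht1
  have h3 : (1:ℂ) + r * s ≠ 0 := by
    have : (0:ℝ) < 1 + rPt a 1 * rPt a k := by nlinarith
    simp only [r, s]
    intro h
    have := congrArg Complex.re h
    push_cast at this
    simp at this
    nlinarith
  have hmid : 1 - s * ((z - r) / (1 - r * z)) = ((1 + r * s) * (1 - t * z)) / (1 - r * z) := by
    have e : (z - r) / (1 - r * z) * (1 - r * z) = z - r := div_mul_cancel₀ _ h1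
    rw [eq_div_iff h1]
    linear_combination -z * hc - s * e
  have hnum : (1 - r ^ 2) * (1 - s ^ 2) = (1 + r * s) ^ 2 * (1 - t ^ 2) := by
    linear_combination (-(r + s) - t * (1 + r * s)) * hc
  rw [hmid]
  field_simp
  rw [hnum]
end
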